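/- Let n₁, n₂ be positive integers and n = n₁ + n₂. Let D₁ be an n₁×n₁ real symmetric positive definite matrix and D₂ an n₂×n₂ real symmetric positive definite matrix, and let a₁ ∈ ℝ^{n₁}, b₂ ∈ ℝ^{n₂} with (a₁, b₂) ≠ (0, 0). Define the block vectors a = (a₁, 0), b = (0, b₂) ∈ ℝⁿ and the block matrices C_A = blockDiag(D₁, 0), C_B = blockDiag(0, D₂) (n×n matrices), so that the two manifolds are supported on complementary coordinate subspaces intersecting only at the origin. Then C_A + C_B = blockDiag(D₁, D₂) is invertible and, with M = (C_A + C_B)⁻¹, the normalized signal mismatch distance equals 1: (a − b)ᵀ M (a − b) / (aᵀ M a + bᵀ M b) = 1. -/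

import Mathlib

open Matrix in
/-- Independent manifolds have normalized signal mismatch distance `1`:
if manifold A is supported on the first block of coordinates (signal vector
`(a₁, 0)`, second-moment matrix `blockDiag(D₁, 0)`) and manifold B on the
complementary block (signal vector `(0, b₂)`, second-moment matrix
`blockDiag(0, D₂)`), with `D₁, D₂` symmetric positive definite and
`(a₁, b₂) ≠ (0, 0)`, then `C_A + C_B = blockDiag(D₁, D₂)` is invertible and,
with `M = (C_A + C_B)⁻¹`, `(a − b)ᵀ M (a − b) / (aᵀ M a + bᵀ M b) = 1`. -/
theorem signal_mismatch_distance_independent (n₁ n₂ : ℕ)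
    (hn₁ : 0 < n₁) (hn₂ : 0 < n₂)
    (D₁ : Matrix (Fin n₁) (Fin n₁) ℝ) (D₂ : Matrix (Fin n₂) (Fin n₂) ℝ)
    (hD₁symm : D₁.IsSymm) (hD₂symm : D₂.IsSymm)
    (hD₁ : D₁.PosDef) (hD₂ : D₂.PosDef)
    (a₁ : Fin n₁ → ℝ) (b₂ : Fin n₂ → ℝ) (hab : a₁ ≠ 0 ∨ b₂ ≠ 0)
    (a b : Fin n₁ ⊕ Fin n₂ → ℝ)
    (ha : a = Sum.elim a₁ (0 : Fin n₂ → ℝ)) (hb : b = Sum.elim (0 : Fin n₁ → ℝ) b₂)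
    (CA CB : Matrix (Fin n₁ ⊕ Fin n₂) (Fin n₁ ⊕ Fin n₂) ℝ)
    (hCA : CA = Matrix.fromBlocks D₁ 0 0 0)
    (hCB : CB = Matrix.fromBlocks 0 0 0 D₂) :
    CA + CB = Matrix.fromBlocks D₁ 0 0 D₂
    ∧ IsUnit (CA + CB)
    ∧ ((a - b) ⬝ᵥ (CA + CB)⁻¹.mulVec (a - b))
        / (a ⬝ᵥ (CA + CB)⁻¹.mulVec a + b ⬝ᵥ (CA + CB)⁻¹.mulVec b) = 1 := by
  subst hCA hCB ha hb
  have hsum : (Matrix.fromBlocks D₁ 0 0 0 + Matrix.fromBlocks 0 0 0 D₂ :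
      Matrix (Fin n₁ ⊕ Fin n₂) (Fin n₁ ⊕ Fin n₂) ℝ) = Matrix.fromBlocks D₁ 0 0 D₂ := by
    rw [Matrix.fromBlocks_add]; simp
  have hd1 : D₁.det ≠ 0 := ne_of_gt hD₁.det_pos
  have hd2 : D₂.det ≠ 0 := ne_of_gt hD₂.det_pos
  have hunit : IsUnit (Matrix.fromBlocks D₁ 0 0 D₂) := by
    rw [Matrix.isUnit_iff_isUnit_det, Matrix.det_fromBlocks_zero₂₁]
    exact (IsUnit.mul (isUnit_iff_ne_zero.mpr hd1) (isUnit_iff_ne_zero.mpr hd2))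
  have hinv : (Matrix.fromBlocks D₁ 0 0 D₂)⁻¹ = Matrix.fromBlocks D₁⁻¹ 0 0 D₂⁻¹ := by
    apply Matrix.inv_eq_right_inv
    rw [Matrix.fromBlocks_multiply]
    simp [Matrix.mul_nonsing_inv _ (isUnit_iff_ne_zero.mpr hd1),
      Matrix.mul_nonsing_inv _ (isUnit_iff_ne_zero.mpr hd2), ← Matrix.fromBlocks_one]
  refine ⟨hsum, hsum ▸ hunit, ?_⟩
  rw [hsum, hinv]
  have hq1 : ∀ x : Fin n₁ → ℝ, x ⬝ᵥ D₁⁻¹.mulVec x = (x ⬝ᵥ D₁⁻¹.mulVec x) := fun _ => rfl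
  have hinv1 : (D₁⁻¹).PosDef := hD₁.inv
  have hinv2 : (D₂⁻¹).PosDef := hD₂.inv
  have key : ∀ (x : Fin n₁ → ℝ) (y : Fin n₂ → ℝ),
      (Sum.elim x y) ⬝ᵥ (Matrix.fromBlocks D₁⁻¹ 0 0 D₂⁻¹).mulVec (Sum.elim x y)
        = x ⬝ᵥ D₁⁻¹.mulVec x + y ⬝ᵥ D₂⁻¹.mulVec y := by
    intro x y
    rw [Matrix.fromBlocks_mulVec, sumElim_dotProduct_sumElim]
    simp
  have hab' : Sum.elim a₁ (0 : Fin n₂ → ℝ) - Sum.elim (0 : Fin n₁ → ℝ) b₂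
      = Sum.elim a₁ (-b₂) := by
    ext (i | j) <;> simp
  rw [hab', key, key, key]
  have hneg : (-b₂) ⬝ᵥ D₂⁻¹.mulVec (-b₂) = b₂ ⬝ᵥ D₂⁻¹.mulVec b₂ := by
    rw [Matrix.mulVec_neg, neg_dotProduct, dotProduct_neg, neg_neg]
  rw [hneg]
  have hpos : 0 < a₁ ⬝ᵥ D₁⁻¹.mulVec a₁ + b₂ ⬝ᵥ D₂⁻¹.mulVec b₂ := by
    have h1 : 0 ≤ a₁ ⬝ᵥ D₁⁻¹.mulVec a₁ := by
      simpa using hinv1.posSemidef.dotProduct_mulVec_nonneg a₁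
    have h2 : 0 ≤ b₂ ⬝ᵥ D₂⁻¹.mulVec b₂ := by
      simpa using hinv2.posSemidef.dotProduct_mulVec_nonneg b₂
    rcases hab with h | h
    · have := hinv1.dotProduct_mulVec_pos h
      calc (0:ℝ) < a₁ ⬝ᵥ D₁⁻¹.mulVec a₁ := by simpa using this
        _ ≤ _ := le_add_of_nonneg_right h2
    · have := hinv2.dotProduct_mulVec_pos h
      calc (0:ℝ) < b₂ ⬝ᵥ D₂⁻¹.mulVec b₂ := by simpa using this
        _ ≤ _ := le_add_of_nonneg_left h1
  simp only [zero_dotProduct, dotProduct_zero]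
  rw [div_eq_one_iff_eq (ne_of_gt (by linarith [hpos] : (0:ℝ) < _))]
  ring_nf
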